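/- Let G be a finite group with normal subgroups N ≤ M, primes p ≠ q, P ∈ Syl_p(G), Q ∈ Syl_q(G), G = MP, M = NQ, with (G, P, P ∩ M) and (M, Q, Q ∩ N) Frobenius-Wielandt triples. If P is chosen so that N_P(Q) = P ∩ N_G(Q) is a Sylow p-subgroup of N_G(Q), then N_P(Q) is a Frobenius complement of the Frobenius group N_G(Q) and P = (N ∩ P) ⋊ N_P(Q) (internal semidirect product: P = (N ∩ P)·N_P(Q) with trivial intersection and N ∩ P normal in P). -/

import Mathlib

open Subgroup

/-- `C` is a Frobenius complement in the ambient group: `1 < C < G` and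
`C ∩ C^x = 1` for all `x ∉ C`. -/
def IsFrobeniusComplementIn {X : Type*} [Group X] (C : Subgroup X) : Prop :=
  ⊥ < C ∧ C < ⊤ ∧ ∀ x : X, x ∉ C → C ⊓ C.map (MulAut.conj x).toMonoidHom = ⊥

/-- `X` is a Frobenius group. -/
def IsFrobeniusGroup (X : Type*) [Group X] : Prop :=
  ∃ C : Subgroup X, IsFrobeniusComplementIn C

/-- `K` is the Frobenius kernel of the ambient group: `K` is a proper nontrivial
normal subgroup admitting a Frobenius complement `C` with `X = K ⋊ C`. -/
def IsFrobeniusKernelIn {X : Type*} [Group X] (K : Subgroup X) : Prop :=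
  K.Normal ∧ ⊥ < K ∧ K < ⊤ ∧ ∃ C : Subgroup X,
    (∀ x : X, x ∉ C → C ⊓ C.map (MulAut.conj x).toMonoidHom = ⊥) ∧
    K ⊔ C = ⊤ ∧ K ⊓ C = ⊥

/-- `(X, H, L)` is a Frobenius–Wielandt triple: `L ⊴ H`, `L < H < X`, and
`H ∩ H^g ≤ L` for all `g ∉ H`. -/
def IsFWTriple {X : Type*} [Group X] (H L : Subgroup X) : Prop :=
  L ≤ H ∧ (L.subgroupOf H).Normal ∧ L < H ∧ H < ⊤ ∧
    ∀ g : X, g ∉ H → H ⊓ H.map (MulAut.conj g).toMonoidHom ≤ L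

/-- `X` is a 2-Frobenius group: there are normal subgroups `K < L < X` with
`X/K` a Frobenius group with kernel `L/K` and `L` a Frobenius group with kernel `K`. -/
def Is2FrobeniusGroup (X : Type*) [Group X] : Prop :=
  ∃ (K L : Subgroup X) (hK : K.Normal), L.Normal ∧ ⊥ < K ∧ K < L ∧ L < ⊤ ∧
    (@IsFrobeniusKernelIn _ (@QuotientGroup.Quotient.group X _ K hK)
      (L.map (@QuotientGroup.mk' X _ K hK))) ∧
    IsFrobeniusKernelIn (K.subgroupOf L)

private lemma card_subgroupOf_eq {G : Type*} [Group G] {H K : Subgroup G} (h : H ≤ K) :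
    Nat.card (H.subgroupOf K) = Nat.card H :=
  Nat.card_congr (Subgroup.subgroupOfEquivOfLe h).toEquiv

theorem stmt_18 {G : Type*} [Group G] [Fintype G] (N M : Subgroup G)
    [N.Normal] [M.Normal] (hNM : N ≤ M)
    {p q : ℕ} [Fact p.Prime] [Fact q.Prime] (hpq : p ≠ q)
    (P : Sylow p G) (Q : Sylow q G)
    (hG : M ⊔ (P : Subgroup G) = ⊤) (hM : N ⊔ (Q : Subgroup G) = M)
    (h1 : IsFWTriple (P : Subgroup G) ((P : Subgroup G) ⊓ M))
    (h2 : IsFWTriple ((Q : Subgroup G).subgroupOf M)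
      (((Q : Subgroup G) ⊓ N).subgroupOf M))
    (hchoice : ∃ S : Sylow p ↥((Subgroup.normalizer ((Q : Subgroup G) : Set G))),
      (S : Subgroup ↥((Subgroup.normalizer ((Q : Subgroup G) : Set G)))).map
          ((Subgroup.normalizer ((Q : Subgroup G) : Set G)).subtype) =
        (P : Subgroup G) ⊓ (Subgroup.normalizer ((Q : Subgroup G) : Set G))) :
    IsFrobeniusGroup ↥((Subgroup.normalizer ((Q : Subgroup G) : Set G))) ∧
    IsFrobeniusComplementIn
      (((P : Subgroup G) ⊓ (Subgroup.normalizer ((Q : Subgroup G) : Set G))).subgroupOf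
        (Subgroup.normalizer ((Q : Subgroup G) : Set G))) ∧
    ((N ⊓ (P : Subgroup G)).subgroupOf (P : Subgroup G)).Normal ∧
    (N ⊓ (P : Subgroup G)) ⊔ ((P : Subgroup G) ⊓ (Subgroup.normalizer ((Q : Subgroup G) : Set G))) =
      (P : Subgroup G) ∧
    (N ⊓ (P : Subgroup G)) ⊓ ((P : Subgroup G) ⊓ (Subgroup.normalizer ((Q : Subgroup G) : Set G))) = ⊥ := by
  classical
  obtain ⟨-, -, hPMlt, -, hPcond⟩ := h1
  obtain ⟨-, -, hQNlt, -, hQcond⟩ := h2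
  set R : Subgroup G := Subgroup.normalizer ((Q : Subgroup G) : Set G) with hRdef
  have hQM : (Q : Subgroup G) ≤ M := le_trans le_sup_right hM.le
  have hQR : (Q : Subgroup G) ≤ R := le_normalizer
  -- an element of `Q` not in `N`
  obtain ⟨q₀M, hq₀Qm, hq₀Nm⟩ := SetLike.exists_of_lt hQNlt
  have hq₀Q : (q₀M : G) ∈ (Q : Subgroup G) := mem_subgroupOf.mp hq₀Qm
  set q₀ : G := (q₀M : G) with hq₀def
  have hq₀M : q₀ ∈ M := q₀M.2
  have hq₀N : q₀ ∉ N := fun h => hq₀Nm (mem_subgroupOf.mpr ⟨hq₀Q, h⟩)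
  -- key : `M ⊓ N_G(Q) ≤ Q`
  have hMR : M ⊓ R ≤ (Q : Subgroup G) := by
    rintro x ⟨hxM, hxR⟩
    by_contra hxQ
    have key := hQcond ⟨x, hxM⟩ (fun h => hxQ (mem_subgroupOf.mp h))
    have hconj : x⁻¹ * q₀ * x ∈ (Q : Subgroup G) := by
      have hx : x * (x⁻¹ * q₀ * x) * x⁻¹ = q₀ := by group
      exact (mem_normalizer_iff.mp hxR _).mpr (by rw [hx]; exact hq₀Q)
    have hmem : q₀M ∈ (Q : Subgroup G).subgroupOf M ⊓
        ((Q : Subgroup G).subgroupOf M).map (MulAut.conj (⟨x, hxM⟩ : M)).toMonoidHom := by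
      refine ⟨mem_subgroupOf.mpr hq₀Q,
        ⟨⟨x⁻¹ * q₀ * x, mul_mem (mul_mem (inv_mem hxM) hq₀M) hxM⟩,
          mem_subgroupOf.mpr hconj, ?_⟩⟩
      refine Subtype.ext ?_
      show x * (x⁻¹ * q₀ * x) * x⁻¹ = q₀
      group
    exact hq₀Nm (key hmem)
  have hPQbot : (P : Subgroup G) ⊓ (Q : Subgroup G) = ⊥ :=
    disjoint_iff.mp (IsPGroup.disjoint_of_ne p q hpq _ _ P.isPGroup' Q.isPGroup')
  set A : Subgroup G := N ⊓ (P : Subgroup G) with hAdef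
  set B : Subgroup G := (P : Subgroup G) ⊓ R with hBdef
  have hA_le : A ≤ (P : Subgroup G) := inf_le_right
  have hB_le : B ≤ (P : Subgroup G) := inf_le_left
  have hB_leR : B ≤ R := inf_le_right
  -- trivial intersection (conclusion 5)
  have hAB : A ⊓ B = ⊥ := by
    rw [eq_bot_iff]
    rintro x ⟨⟨hxN, hxP⟩, -, hxR⟩
    have hxQ : x ∈ (Q : Subgroup G) := hMR ⟨hNM hxN, hxR⟩
    have hx : x ∈ (P : Subgroup G) ⊓ (Q : Subgroup G) := ⟨hxP, hxQ⟩
    rwa [hPQbot] at hx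
  -- normality (conclusion 3)
  have hAnormal : (A.subgroupOf (P : Subgroup G)).Normal := by
    rw [hAdef, inf_subgroupOf_right]
    infer_instance
  -- Frattini
  have hRM : R ⊔ M = ⊤ := Sylow.normalizer_sup_eq_top' Q hQM
  have hNR : N ⊔ R = ⊤ := by
    calc N ⊔ R = N ⊔ ((Q : Subgroup G) ⊔ R) := by rw [sup_eq_right.mpr hQR]
      _ = (N ⊔ (Q : Subgroup G)) ⊔ R := (sup_assoc _ _ _).symm
      _ = M ⊔ R := by rw [hM]
      _ = ⊤ := by rw [sup_comm]; exact hRM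
  -- cardinality bookkeeping
  have hNRQ : N ⊓ R ≤ (Q : Subgroup G) := fun x hx => hMR ⟨hNM hx.1, hx.2⟩
  have hpNR : ¬ p ∣ Nat.card (N ⊓ R : Subgroup G) := by
    obtain ⟨m, hm⟩ := IsPGroup.iff_card.mp Q.isPGroup'
    intro hdvd
    have h1 : Nat.card (N ⊓ R : Subgroup G) ∣ q ^ m := hm ▸ Subgroup.card_dvd_of_le hNRQ
    have h2 : p ∣ q := (Fact.out : p.Prime).dvd_of_dvd_pow (hdvd.trans h1)
    exact hpq ((Nat.prime_dvd_prime_iff_eq Fact.out Fact.out).mp h2)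
  have hNindex_ne : N.index ≠ 0 := Subgroup.index_ne_zero_of_finite
  have cardR_eq : Nat.card R = N.index * Nat.card (N ⊓ R : Subgroup G) := by
    have h1 := Subgroup.index_mul_card (N.subgroupOf R)
    have h2 : (N.subgroupOf R).index = N.index := by
      show N.relIndex R = N.index
      rw [← Subgroup.relIndex_sup_right R N, sup_comm R N, hNR, Subgroup.relIndex_top_right]
    have h3 : Nat.card (N.subgroupOf R) = Nat.card (N ⊓ R : Subgroup G) := by
      rw [← inf_subgroupOf_right]
      exact card_subgroupOf_eq inf_le_right
    rw [h2, h3] at h1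
    exact h1.symm
  have cardG_eq : Nat.card G = N.index * Nat.card N := (Subgroup.index_mul_card N).symm
  have hfR : (Nat.card R).factorization p = (N.index).factorization p := by
    rw [cardR_eq, Nat.factorization_mul hNindex_ne Nat.card_pos.ne', Finsupp.add_apply,
      Nat.factorization_eq_zero_of_not_dvd hpNR, add_zero]
  have hfG : (Nat.card G).factorization p
      = (N.index).factorization p + (Nat.card N).factorization p := by
    rw [cardG_eq, Nat.factorization_mul hNindex_ne Nat.card_pos.ne', Finsupp.add_apply]
  -- `A` is a Sylow `p`-subgroup of `N`
  obtain ⟨a, hacard⟩ : ∃ a, Nat.card A = p ^ a :=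
    IsPGroup.iff_card.mp (P.isPGroup'.to_le hA_le)
  have e1 : Nat.card ((P : Subgroup G) ⊔ N : Subgroup G)
      = N.relIndex (P : Subgroup G) * Nat.card N := by
    have h1 := Subgroup.index_mul_card (N.subgroupOf ((P : Subgroup G) ⊔ N))
    have h2 : (N.subgroupOf ((P : Subgroup G) ⊔ N)).index = N.relIndex (P : Subgroup G) := by
      show N.relIndex _ = _
      rw [Subgroup.relIndex_sup_right]
    rw [h2, card_subgroupOf_eq le_sup_right] at h1
    exact h1.symm
  have e2 : Nat.card (P : Subgroup G) = N.relIndex (P : Subgroup G) * Nat.card A := by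
    have h1 := Subgroup.index_mul_card (N.subgroupOf (P : Subgroup G))
    have h3 : Nat.card (N.subgroupOf (P : Subgroup G)) = Nat.card A := by
      rw [hAdef, ← inf_subgroupOf_right]
      exact card_subgroupOf_eq inf_le_right
    rw [h3] at h1
    exact h1.symm
  have e3 : Nat.card ((P : Subgroup G) ⊔ N : Subgroup G)
      = (P : Subgroup G).relIndex ((P : Subgroup G) ⊔ N) * Nat.card (P : Subgroup G) := by
    have h1 := Subgroup.index_mul_card ((P : Subgroup G).subgroupOf ((P : Subgroup G) ⊔ N))
    rw [card_subgroupOf_eq le_sup_left] at h1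
    exact h1.symm
  have hrelPT : ¬ p ∣ (P : Subgroup G).relIndex ((P : Subgroup G) ⊔ N) := fun h =>
    P.not_dvd_index (h.trans (Subgroup.relIndex_dvd_index_of_le le_sup_left))
  have hrelN_ne : N.relIndex (P : Subgroup G) ≠ 0 := Subgroup.index_ne_zero_of_finite
  have hrelPT_ne : (P : Subgroup G).relIndex ((P : Subgroup G) ⊔ N) ≠ 0 :=
    Subgroup.index_ne_zero_of_finite
  have ecardN : Nat.card N
      = (P : Subgroup G).relIndex ((P : Subgroup G) ⊔ N) * Nat.card A := by
    have h := e3.symm.trans e1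
    rw [e2] at h
    rw [mul_left_comm] at h
    exact (Nat.eq_of_mul_eq_mul_left (Nat.pos_of_ne_zero hrelN_ne) h).symm
  have hfN : (Nat.card N).factorization p = a := by
    rw [ecardN, hacard,
      Nat.factorization_mul hrelPT_ne (pow_ne_zero a (Fact.out : p.Prime).pos.ne'),
      Finsupp.add_apply, Nat.factorization_eq_zero_of_not_dvd hrelPT, zero_add,
      Nat.Prime.factorization_pow (Fact.out : p.Prime), Finsupp.single_eq_same]
  -- card of `B`
  obtain ⟨S, hS⟩ := hchoice
  have cardB : Nat.card B = p ^ (Nat.card R).factorization p := by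
    have h1 : Nat.card B = Nat.card (S : Subgroup R) := by
      rw [← hS]
      exact (Nat.card_congr
        (Subgroup.equivMapOfInjective _ _ R.subtype_injective).toEquiv).symm
    rw [h1, S.card_eq_multiplicity]
  have cardAB : Nat.card A * Nat.card B = Nat.card (P : Subgroup G) := by
    rw [hacard, cardB, Sylow.card_eq_multiplicity P, ← pow_add]
    congr 1
    rw [hfG, hfR, hfN]
    omega
  -- `A ⊔ B = P`
  set A' : Subgroup (P : Subgroup G) := A.subgroupOf (P : Subgroup G) with hA'def
  set B' : Subgroup (P : Subgroup G) := B.subgroupOf (P : Subgroup G) with hB'def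
  have hA'B' : A' ⊓ B' = ⊥ := by
    have h : A' ⊓ B' = (A ⊓ B).subgroupOf (P : Subgroup G) := (Subgroup.comap_inf _ _ _).symm
    rw [h, hAB, bot_subgroupOf]
  haveI hA'normal : A'.Normal := hAnormal
  have cardA' : Nat.card A' = Nat.card A := card_subgroupOf_eq hA_le
  have cardB' : Nat.card B' = Nat.card B := card_subgroupOf_eq hB_le
  have e1' : A'.relIndex B' = Nat.card B' := by
    have h1 := Subgroup.index_mul_card (A'.subgroupOf B')
    have h2 : Nat.card (A'.subgroupOf B') = 1 := by
      rw [← inf_subgroupOf_right, hA'B', bot_subgroupOf]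
      exact Subgroup.card_bot
    rw [h2, mul_one] at h1
    exact h1
  have e2' : Nat.card (B' ⊔ A' : Subgroup (P : Subgroup G))
      = A'.relIndex (B' ⊔ A') * Nat.card A' := by
    have h1 := Subgroup.index_mul_card (A'.subgroupOf (B' ⊔ A'))
    rw [card_subgroupOf_eq le_sup_right] at h1
    exact h1.symm
  have e3' : A'.relIndex (B' ⊔ A') = A'.relIndex B' := Subgroup.relIndex_sup_right B' A'
  have ecard' : Nat.card (B' ⊔ A' : Subgroup (P : Subgroup G)) = Nat.card (P : Subgroup G) := by
    rw [e2', e3', e1', cardA', cardB', mul_comm, cardAB]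
  have htop : B' ⊔ A' = ⊤ := Subgroup.eq_top_of_card_eq _ ecard'
  have hsup : A ⊔ B = (P : Subgroup G) := by
    refine le_antisymm (sup_le hA_le hB_le) ?_
    refine Subgroup.subgroupOf_eq_top.mp ?_
    rw [Subgroup.subgroupOf_sup hA_le hB_le]
    rw [sup_comm] at htop
    exact htop
  -- the Frobenius complement
  set C : Subgroup R := B.subgroupOf R with hCdef
  have hCcard : Nat.card C = Nat.card B := card_subgroupOf_eq hB_leR
  have hCne : C ≠ ⊥ := by
    intro h
    have hc1 : Nat.card B = 1 := by rw [← hCcard, h]; exact Subgroup.card_bot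
    have hAP : Nat.card A = Nat.card (P : Subgroup G) := by rw [← cardAB, hc1, mul_one]
    have hAPeq : A = (P : Subgroup G) := Subgroup.eq_of_le_of_card_ge hA_le hAP.ge
    have hPN : (P : Subgroup G) ≤ N := inf_eq_right.mp (hAdef ▸ hAPeq)
    exact hPMlt.ne (inf_eq_left.mpr (hPN.trans hNM))
  have hCbotlt : ⊥ < C := bot_lt_iff_ne_bot.mpr hCne
  have hq₀R : q₀ ∈ R := hQR hq₀Q
  have hq₀P : q₀ ∉ (P : Subgroup G) := by
    intro h
    have hx : q₀ ∈ (P : Subgroup G) ⊓ (Q : Subgroup G) := ⟨h, hq₀Q⟩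
    rw [hPQbot] at hx
    exact hq₀N (by rw [Subgroup.mem_bot.mp hx]; exact one_mem N)
  have hClttop : C < ⊤ := by
    refine lt_top_iff_ne_top.mpr fun h => ?_
    have hx : R ≤ B := Subgroup.subgroupOf_eq_top.mp (hCdef ▸ h)
    exact hq₀P (hx hq₀R).1
  have hCmain : ∀ x : R, x ∉ C → C ⊓ C.map (MulAut.conj x).toMonoidHom = ⊥ := by
    intro x hx
    rw [eq_bot_iff]
    rintro g ⟨hg1, h0, hh0, hgh⟩
    have hgP : (g : G) ∈ (P : Subgroup G) := (mem_subgroupOf.mp hg1).1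
    have hxP : (x : G) ∉ (P : Subgroup G) := fun h => hx (mem_subgroupOf.mpr ⟨h, x.2⟩)
    have hgconj : (g : G) ∈ (P : Subgroup G).map (MulAut.conj (x : G)).toMonoidHom := by
      refine ⟨h0, (mem_subgroupOf.mp hh0).1, ?_⟩
      rw [← hgh]
      rfl
    have hgM : (g : G) ∈ M := (hPcond (x : G) hxP ⟨hgP, hgconj⟩).2
    have hgQ : (g : G) ∈ (Q : Subgroup G) := hMR ⟨hgM, g.2⟩
    have hg : (g : G) ∈ (P : Subgroup G) ⊓ (Q : Subgroup G) := ⟨hgP, hgQ⟩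
    rw [hPQbot] at hg
    exact Subgroup.mem_bot.mpr (Subtype.ext (Subgroup.mem_bot.mp hg))
  exact ⟨⟨C, hCbotlt, hClttop, hCmain⟩, ⟨hCbotlt, hClttop, hCmain⟩, hAnormal, hsup, hAB⟩
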